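/- Let Y be standard Gaussian in R^p and let Φ_p = { λ ∈ [0,1]^p : λ_1 ≥ ... ≥ λ_p ≥ 0, Σ_j λ_j = 1 }. Define φ : Φ_p → Φ_p by φ(λ)_i = E[λ_i Y_i² / Σ_j λ_j Y_j²]. Then φ is injective: φ(λ) = φ(λ') implies λ = λ'. -/

import Mathlib

open MeasureTheory ProbabilityTheory Real

/-- The law of a vector of `p` i.i.d. standard normal random variables. -/
noncomputable def stdGaussianPi (p : ℕ) : Measure (Fin p → ℝ) :=
  Measure.pi fun _ => gaussianReal 0 1

/-- The `i`-th eigenvalue of the spatial sign covariance matrix corresponding to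
shape eigenvalues `lam`. -/
noncomputable def sscmEigen (p : ℕ) (lam : Fin p → ℝ) (i : Fin p) : ℝ :=
  ∫ ω, lam i * (ω i) ^ 2 / (∑ j, lam j * (ω j) ^ 2) ∂(stdGaussianPi p)

instance (p : ℕ) : IsProbabilityMeasure (stdGaussianPi p) := by
  unfold stdGaussianPi; infer_instance

lemma aux_ae_ne_zero (p : ℕ) : ∀ᵐ ω ∂(stdGaussianPi p), ∀ j, ω j ≠ 0 := by
  rw [MeasureTheory.ae_all_iff]
  intro j
  rw [ae_iff]
  have : {ω : Fin p → ℝ | ¬ ω j ≠ 0} = Function.eval j ⁻¹' {0} := by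
    ext ω; simp [Function.eval]
  rw [this]
  exact Measure.pi_eval_preimage_null _
    ((gaussianReal_absolutelyContinuous 0 one_ne_zero) Real.volume_singleton)

lemma aux_meas (p : ℕ) (lam : Fin p → ℝ) (i : Fin p) :
    Measurable (fun ω : Fin p → ℝ => lam i * (ω i) ^ 2 / (∑ j, lam j * (ω j) ^ 2)) := by
  have h : ∀ k : Fin p, Measurable (fun ω : Fin p → ℝ => lam k * (ω k) ^ 2) :=
    fun k => measurable_const.mul ((measurable_pi_apply k).pow_const 2)
  exact (h i).div (Finset.measurable_sum _ fun k _ => h k)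

lemma aux_mem_Icc (p : ℕ) (lam : Fin p → ℝ) (h0 : ∀ k, 0 ≤ lam k) (i : Fin p)
    (ω : Fin p → ℝ) :
    lam i * (ω i) ^ 2 / (∑ j, lam j * (ω j) ^ 2) ∈ Set.Icc (0:ℝ) 1 := by
  have hterm : ∀ k : Fin p, 0 ≤ lam k * (ω k) ^ 2 :=
    fun k => mul_nonneg (h0 k) (sq_nonneg _)
  have hQ0 : 0 ≤ ∑ j, lam j * (ω j) ^ 2 := Finset.sum_nonneg fun k _ => hterm k
  have hle : lam i * (ω i) ^ 2 ≤ ∑ j, lam j * (ω j) ^ 2 :=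
    Finset.single_le_sum (fun k _ => hterm k) (Finset.mem_univ i)
  rcases eq_or_lt_of_le hQ0 with hQ | hQ
  · have : lam i * (ω i) ^ 2 = 0 := le_antisymm (hQ ▸ hle) (hterm i)
    simp [this]
  · exact ⟨div_nonneg (hterm i) hQ0, div_le_one_of_le₀ hle hQ0⟩

lemma aux_integrable (p : ℕ) (lam : Fin p → ℝ) (h0 : ∀ k, 0 ≤ lam k) (i : Fin p) :
    Integrable (fun ω : Fin p → ℝ => lam i * (ω i) ^ 2 / (∑ j, lam j * (ω j) ^ 2))
      (stdGaussianPi p) := by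
  refine Integrable.mono' (integrable_const 1) (aux_meas p lam i).aestronglyMeasurable
    (Filter.Eventually.of_forall fun ω => ?_)
  have h := aux_mem_Icc p lam h0 i ω
  rw [Real.norm_eq_abs, abs_of_nonneg h.1]
  exact h.2

lemma aux_pos (p : ℕ) (lam : Fin p → ℝ) (h0 : ∀ k, 0 ≤ lam k) (i : Fin p)
    (hi : 0 < lam i) : 0 < sscmEigen p lam i := by
  rw [sscmEigen, integral_pos_iff_support_of_nonneg
    (fun ω => (aux_mem_Icc p lam h0 i ω).1) (aux_integrable p lam h0 i)]
  have hsub : {ω : Fin p → ℝ | ∀ j, ω j ≠ 0} ⊆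
      Function.support (fun ω : Fin p → ℝ =>
        lam i * (ω i) ^ 2 / (∑ j, lam j * (ω j) ^ 2)) := by
    intro ω hω
    have hnum : 0 < lam i * (ω i) ^ 2 :=
      mul_pos hi (pow_pos (abs_pos.mpr (hω i)) 2 |>.trans_le (le_of_eq (sq_abs _)))
    have hQ : 0 < ∑ j, lam j * (ω j) ^ 2 :=
      lt_of_lt_of_le hnum (Finset.single_le_sum
        (fun k _ => mul_nonneg (h0 k) (sq_nonneg _)) (Finset.mem_univ i))
    exact ne_of_gt (div_pos hnum hQ)
  have hfull : (stdGaussianPi p) {ω : Fin p → ℝ | ∀ j, ω j ≠ 0} ≠ 0 := by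
    intro hcontra
    have := aux_ae_ne_zero p
    rw [ae_iff] at this
    have h1 : (stdGaussianPi p) Set.univ ≤
        (stdGaussianPi p) {ω : Fin p → ℝ | ∀ j, ω j ≠ 0} +
        (stdGaussianPi p) {ω : Fin p → ℝ | ¬ ∀ j, ω j ≠ 0} := by
      refine le_trans (measure_mono ?_) (measure_union_le _ _)
      intro ω _
      by_cases h : ∀ j, ω j ≠ 0
      · exact Or.inl h
      · exact Or.inr h
    rw [measure_univ, hcontra, this, add_zero] at h1
    exact absurd h1 (by norm_num)
  refine lt_of_lt_of_le ?_ (measure_mono hsub)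
  exact lt_of_le_of_ne zero_le (Ne.symm hfull)

theorem sscmEigen_injective (p : ℕ) (lam lam' : Fin p → ℝ)
    (hmono : Antitone lam) (hmono' : Antitone lam')
    (hmem : ∀ i, lam i ∈ Set.Icc (0 : ℝ) 1) (hmem' : ∀ i, lam' i ∈ Set.Icc (0 : ℝ) 1)
    (hsum : ∑ i, lam i = 1) (hsum' : ∑ i, lam' i = 1)
    (heq : ∀ i, sscmEigen p lam i = sscmEigen p lam' i) :
    lam = lam' := by
  have h0 : ∀ k, 0 ≤ lam k := fun k => (hmem k).1
  have h0' : ∀ k, 0 ≤ lam' k := fun k => (hmem' k).1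
  -- zeros of lam' are zeros of lam
  have hsupp : ∀ i, lam' i = 0 → lam i = 0 := by
    intro i hz
    by_contra hne
    have hpos : 0 < lam i := lt_of_le_of_ne (h0 i) (Ne.symm hne)
    have h1 := aux_pos p lam h0 i hpos
    have h2 : sscmEigen p lam' i = 0 := by
      rw [sscmEigen]; simp [hz]
    rw [heq i, h2] at h1
    exact lt_irrefl 0 h1
  -- maximizer of the ratio lam / lam' over the support of lam'
  obtain ⟨i1, hi1⟩ : ∃ i, 0 < lam' i := by
    by_contra h
    push_neg at h
    have : ∑ i, lam' i ≤ 0 := Finset.sum_nonpos fun i _ => h i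
    linarith
  obtain ⟨i0, hi0T, hmax⟩ := Finset.exists_max_image
    (Finset.univ.filter (fun i => 0 < lam' i)) (fun i => lam i / lam' i)
    ⟨i1, Finset.mem_filter.mpr ⟨Finset.mem_univ _, hi1⟩⟩
  have hli0' : 0 < lam' i0 := (Finset.mem_filter.mp hi0T).2
  set r : ℝ := lam i0 / lam' i0 with hr_def
  have hri0 : lam i0 = r * lam' i0 := (div_mul_cancel₀ _ (ne_of_gt hli0')).symm
  have hr_le : ∀ j, lam j ≤ r * lam' j := by
    intro j
    by_cases hj : 0 < lam' j
    · exact (div_le_iff₀ hj).mp (hmax j (Finset.mem_filter.mpr ⟨Finset.mem_univ _, hj⟩))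
    · have hz : lam' j = 0 := le_antisymm (not_lt.mp hj) (h0' j)
      rw [hsupp j hz, hz, mul_zero]
  have hr1 : 1 ≤ r := by
    have : (1:ℝ) = ∑ i, lam i := hsum.symm
    calc (1:ℝ) = ∑ i, lam i := hsum.symm
      _ ≤ ∑ i, r * lam' i := Finset.sum_le_sum fun i _ => hr_le i
      _ = r * ∑ i, lam' i := by rw [Finset.mul_sum]
      _ = r := by rw [hsum', mul_one]
  have hrpos : 0 < r := lt_of_lt_of_le zero_lt_one hr1
  have hli0 : 0 < lam i0 := by rw [hri0]; exact mul_pos hrpos hli0'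
  -- the key integral comparison at i0
  set f : (Fin p → ℝ) → ℝ :=
    fun ω => lam i0 * (ω i0) ^ 2 / (∑ j, lam j * (ω j) ^ 2) with hf_def
  set g : (Fin p → ℝ) → ℝ :=
    fun ω => lam' i0 * (ω i0) ^ 2 / (∑ j, lam' j * (ω j) ^ 2) with hg_def
  have hf_int := aux_integrable p lam h0 i0
  have hg_int := aux_integrable p lam' h0' i0
  have hfg : ∀ᵐ ω ∂(stdGaussianPi p), g ω ≤ f ω := by
    filter_upwards [aux_ae_ne_zero p] with ω hω
    have hnum : 0 < lam i0 * (ω i0) ^ 2 :=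
      mul_pos hli0 (pow_pos (abs_pos.mpr (hω i0)) 2 |>.trans_le (le_of_eq (sq_abs _)))
    have hQ : 0 < ∑ j, lam j * (ω j) ^ 2 :=
      lt_of_lt_of_le hnum (Finset.single_le_sum
        (fun k _ => mul_nonneg (h0 k) (sq_nonneg _)) (Finset.mem_univ i0))
    have hQle : (∑ j, lam j * (ω j) ^ 2) ≤ r * ∑ j, lam' j * (ω j) ^ 2 := by
      rw [Finset.mul_sum]
      refine Finset.sum_le_sum fun j _ => ?_
      rw [← mul_assoc]
      exact mul_le_mul_of_nonneg_right (hr_le j) (sq_nonneg _)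
    have hkey : lam i0 * (ω i0) ^ 2 / (r * ∑ j, lam' j * (ω j) ^ 2) = g ω := by
      rw [hg_def, hri0, mul_assoc, mul_div_mul_left _ _ (ne_of_gt hrpos)]
    calc g ω = lam i0 * (ω i0) ^ 2 / (r * ∑ j, lam' j * (ω j) ^ 2) := hkey.symm
      _ ≤ f ω := div_le_div_of_nonneg_left hnum.le hQ hQle
  have key : ∫ ω, f ω ∂(stdGaussianPi p) = ∫ ω, g ω ∂(stdGaussianPi p) := heq i0
  have hzero : ∫ ω, (f ω - g ω) ∂(stdGaussianPi p) = 0 := by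
    rw [integral_sub hf_int hg_int, key, sub_self]
  have hae : (fun ω => f ω - g ω) =ᵐ[stdGaussianPi p] 0 :=
    (integral_eq_zero_iff_of_nonneg_ae
      (hfg.mono fun ω h => sub_nonneg.mpr h) (hf_int.sub hg_int)).mp hzero
  haveI : (ae (stdGaussianPi p)).NeBot :=
    ae_neBot.mpr (IsProbabilityMeasure.ne_zero (stdGaussianPi p))
  obtain ⟨ω, hω1, hω2⟩ := (hae.and (aux_ae_ne_zero p)).exists
  -- extract lam = r • lam' from the single point ω
  have hnum : 0 < lam i0 * (ω i0) ^ 2 :=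
    mul_pos hli0 (pow_pos (abs_pos.mpr (hω2 i0)) 2 |>.trans_le (le_of_eq (sq_abs _)))
  have hQ : 0 < ∑ j, lam j * (ω j) ^ 2 :=
    lt_of_lt_of_le hnum (Finset.single_le_sum
      (fun k _ => mul_nonneg (h0 k) (sq_nonneg _)) (Finset.mem_univ i0))
  have hnum' : 0 < lam' i0 * (ω i0) ^ 2 :=
    mul_pos hli0' (pow_pos (abs_pos.mpr (hω2 i0)) 2 |>.trans_le (le_of_eq (sq_abs _)))
  have hQ' : 0 < ∑ j, lam' j * (ω j) ^ 2 :=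
    lt_of_lt_of_le hnum' (Finset.single_le_sum
      (fun k _ => mul_nonneg (h0' k) (sq_nonneg _)) (Finset.mem_univ i0))
  have hrQ' : 0 < r * ∑ j, lam' j * (ω j) ^ 2 := mul_pos hrpos hQ'
  have hfeqg : f ω = g ω := by
    have : f ω - g ω = 0 := hω1
    linarith
  have hkey : lam i0 * (ω i0) ^ 2 / (r * ∑ j, lam' j * (ω j) ^ 2) = g ω := by
    rw [hg_def, hri0, mul_assoc, mul_div_mul_left _ _ (ne_of_gt hrpos)]
  have hQeq : (∑ j, lam j * (ω j) ^ 2) = r * ∑ j, lam' j * (ω j) ^ 2 := by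
    have h1 : lam i0 * (ω i0) ^ 2 / (∑ j, lam j * (ω j) ^ 2)
        = lam i0 * (ω i0) ^ 2 / (r * ∑ j, lam' j * (ω j) ^ 2) := by
      rw [hkey]; exact hfeqg
    have h2 := (div_eq_div_iff (ne_of_gt hQ) (ne_of_gt hrQ')).mp h1
    have h3 : lam i0 * (ω i0) ^ 2 * (r * ∑ j, lam' j * (ω j) ^ 2)
        = lam i0 * (ω i0) ^ 2 * (∑ j, lam j * (ω j) ^ 2) := by linarith
    exact (mul_left_cancel₀ (ne_of_gt hnum) h3).symm
  have hsum0 : ∑ j, (r * lam' j - lam j) * (ω j) ^ 2 = 0 := by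
    have : ∑ j, (r * lam' j - lam j) * (ω j) ^ 2
        = r * (∑ j, lam' j * (ω j) ^ 2) - ∑ j, lam j * (ω j) ^ 2 := by
      rw [Finset.mul_sum, ← Finset.sum_sub_distrib]
      exact Finset.sum_congr rfl fun j _ => by ring
    rw [this, ← hQeq, sub_self]
  have hterm : ∀ j, lam j = r * lam' j := by
    intro j
    have h := (Finset.sum_eq_zero_iff_of_nonneg fun j _ =>
      mul_nonneg (sub_nonneg.mpr (hr_le j)) (sq_nonneg _)).mp hsum0 j (Finset.mem_univ j)
    rcases mul_eq_zero.mp h with h' | h'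
    · linarith
    · exact absurd h' (pow_ne_zero 2 (hω2 j))
  have hr_eq : r = 1 := by
    have : (1:ℝ) = r * 1 := by
      calc (1:ℝ) = ∑ i, lam i := hsum.symm
        _ = ∑ i, r * lam' i := Finset.sum_congr rfl fun i _ => hterm i
        _ = r * ∑ i, lam' i := by rw [Finset.mul_sum]
        _ = r * 1 := by rw [hsum']
    linarith
  funext j
  rw [hterm j, hr_eq, one_mul]
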